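/- Let f₁,…,fₙ : ℂ → ℂ be such that every consecutive-tail discrete Wronskian Wr(fₙ,…,fᵢ) is nonzero. Then the unique monic difference operator S of order n annihilating f₁,…,fₙ factors as S = (T − g₁(x+1)/g₁(x)) ∘ ⋯ ∘ (T − gₙ(x+1)/gₙ(x)), where gₙ = fₙ and gᵢ = Wr(fₙ, fₙ₋₁,…,fᵢ)/Wr(fₙ,…,fᵢ₊₁) for i = 1,…,n−1. -/

import Mathlib

/-- Discrete Wronskian of a list of functions. -/
noncomputable def dWrL (L : List (ℂ → ℂ)) (x : ℂ) : ℂ :=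
  Matrix.det (Matrix.of fun i j : Fin L.length => L.get i (x + (j : ℕ)))

/-- Application of the first-order difference operator `T - r(x)` to `g`. -/
def factorApply (r : ℂ → ℂ) (g : ℂ → ℂ) : ℂ → ℂ :=
  fun x => g (x + 1) - r x * g x

/-- A monic difference operator of order `n`, `S = Tⁿ + ∑ⱼ aⱼ(x) T^(n-j)`, applied to `g`. -/
noncomputable def diffOpApply {n : ℕ} (a : Fin n → ℂ → ℂ) (g : ℂ → ℂ) (x : ℂ) : ℂ :=
  g (x + n) + ∑ j : Fin n, a j x * g (x + ((n - (j.val + 1) : ℕ) : ℂ))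

/-- Discrete Wronskian for a `Fin`-tuple of functions. -/
noncomputable def dWr {m : ℕ} (u : Fin m → ℂ → ℂ) (x : ℂ) : ℂ :=
  Matrix.det (Matrix.of fun i j : Fin m => u i (x + (j : ℕ)))

lemma dWrL_ofFn {m : ℕ} (u : Fin m → ℂ → ℂ) (x : ℂ) :
    dWrL (List.ofFn u) x = dWr u x := by
  unfold dWrL dWr
  rw [← Matrix.det_reindex_self (finCongr (List.length_ofFn : (List.ofFn u).length = m)) ]
  congr 1
  ext i j
  simp [Matrix.reindex, List.get_ofFn]

/-- Lower-form monic difference operator of order `m`. -/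
noncomputable def lowOp {m : ℕ} (c : Fin m → ℂ → ℂ) (h : ℂ → ℂ) (x : ℂ) : ℂ :=
  h (x + m) + ∑ k : Fin m, c k x * h (x + (k : ℕ))

lemma lowOp_unique {m : ℕ} (u : Fin m → ℂ → ℂ) (hdet : ∀ x, dWr u x ≠ 0)
    (c c' : Fin m → ℂ → ℂ) (hc : ∀ i x, lowOp c (u i) x = 0)
    (hc' : ∀ i x, lowOp c' (u i) x = 0) : c = c' := by
  funext k x
  set M : Matrix (Fin m) (Fin m) ℂ := Matrix.of fun i j : Fin m => u i (x + (j : ℕ)) with hM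
  have hMdet : IsUnit M.det := by
    have := hdet x
    unfold dWr at this
    exact isUnit_iff_ne_zero.2 this
  have hinj : Function.Injective M.mulVec :=
    Matrix.mulVec_injective_iff_isUnit.2 ((Matrix.isUnit_iff_isUnit_det M).2 hMdet)
  have hmv : M.mulVec (fun j => c j x) = M.mulVec (fun j => c' j x) := by
    funext i
    have h1 := hc i x
    have h2 := hc' i x
    unfold lowOp at h1 h2
    simp only [Matrix.mulVec, dotProduct, hM, Matrix.of_apply]
    have e1 : ∑ j : Fin m, u i (x + (j : ℕ)) * c j x = -u i (x + (m : ℕ)) := by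
      rw [Finset.sum_congr rfl (fun j _ => mul_comm (u i (x + ((j:Fin m):ℕ))) (c j x))]
      linear_combination h1
    have e2 : ∑ j : Fin m, u i (x + (j : ℕ)) * c' j x = -u i (x + (m : ℕ)) := by
      rw [Finset.sum_congr rfl (fun j _ => mul_comm (u i (x + ((j:Fin m):ℕ))) (c' j x))]
      linear_combination h2
    rw [e1, e2]
  exact congrFun (hinj hmv) k

/-- foldr of factorApply over a list of ratio functions is a lower-form monic operator. -/
lemma foldr_lowform {m : ℕ} (R : Fin m → ℂ → ℂ) :
    ∃ c : Fin m → ℂ → ℂ, ∀ h x, (List.ofFn R).foldr factorApply h x = lowOp c h x := by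
  induction m with
  | zero =>
    refine ⟨fun k => absurd k.2 (by omega), fun h x => ?_⟩
    simp [lowOp]
  | succ m ih =>
    obtain ⟨c, hc⟩ := ih (fun i => R i.succ)
    refine ⟨fun j y =>
      (if hj : (j : ℕ) < m then -R 0 y * c ⟨j, hj⟩ y else -R 0 y) +
      (if hj : 0 < (j : ℕ) then c ⟨(j : ℕ) - 1, by omega⟩ (y + 1) else 0),
      fun h x => ?_⟩
    rw [List.ofFn_succ, List.foldr_cons]
    show (List.ofFn fun i => R i.succ).foldr factorApply h (x + 1)
        - R 0 x * (List.ofFn fun i => R i.succ).foldr factorApply h x = _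
    rw [hc, hc]
    unfold lowOp
    simp only [add_mul, Finset.sum_add_distrib]
    rw [Fin.sum_univ_castSucc (f := fun j : Fin (m+1) =>
      (if hj : ((j:ℕ)) < m then -R 0 x * c ⟨j, hj⟩ x else -R 0 x) * h (x + (j:ℕ)))]
    rw [Fin.sum_univ_succ (f := fun j : Fin (m+1) =>
      (if hj : 0 < ((j:ℕ)) then c ⟨(j:ℕ) - 1, by omega⟩ (x + 1) else 0) * h (x + (j:ℕ)))]
    have e1 : ∀ j : Fin m, (if hj : ((j.castSucc : Fin (m+1)) : ℕ) < m then
        -R 0 x * c ⟨(j.castSucc : Fin (m+1)), hj⟩ x else -R 0 x) * h (x + ((j.castSucc : Fin (m+1)) : ℕ))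
        = -R 0 x * (c j x * h (x + (j : ℕ))) := by
      intro j
      rw [dif_pos (by simpa using j.2)]
      simp; ring
    have e2 : ∀ j : Fin m, (if hj : 0 < ((j.succ : Fin (m+1)) : ℕ) then
        c ⟨((j.succ : Fin (m+1)) : ℕ) - 1, by omega⟩ (x + 1) else 0) * h (x + ((j.succ : Fin (m+1)) : ℕ))
        = c j (x + 1) * h (x + 1 + (j : ℕ)) := by
      intro j
      rw [dif_pos (by simp)]
      have : x + ((j.succ : Fin (m+1)) : ℕ) = x + 1 + (j : ℕ) := by
        push_cast [Fin.val_succ]; ring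
      rw [this]
      congr 2
    rw [Finset.sum_congr rfl (fun j _ => e1 j), Finset.sum_congr rfl (fun j _ => e2 j)]
    have elast : (if hj : ((Fin.last m : Fin (m+1)) : ℕ) < m then
        -R 0 x * c ⟨(Fin.last m : Fin (m+1)), hj⟩ x else -R 0 x) * h (x + ((Fin.last m : Fin (m+1)) : ℕ))
        = -R 0 x * h (x + (m : ℕ)) := by
      rw [dif_neg (by simp)]
      simp
    rw [elast]
    have e0 : (if hj : 0 < (((0 : Fin (m+1))) : ℕ) then
        c ⟨(((0 : Fin (m+1))) : ℕ) - 1, by omega⟩ (x + 1) else 0) * h (x + (((0 : Fin (m+1))) : ℕ)) = 0 := by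
      rw [dif_neg (by simp)]; ring
    rw [e0]
    push_cast
    simp only [mul_add, Finset.mul_sum, neg_mul, Finset.sum_neg_distrib, mul_assoc]
    ring

lemma dWr_cons_expand {m : ℕ} (u : Fin m → ℂ → ℂ) (v : ℂ → ℂ) (x : ℂ) :
    dWr (Fin.cons v u) x =
      ∑ j : Fin (m + 1), (-1) ^ (j : ℕ) * v (x + (j : ℕ)) *
        Matrix.det (Matrix.of fun i k : Fin m => u i (x + ((j.succAbove k : Fin (m+1)) : ℕ))) := by
  unfold dWr
  rw [Matrix.det_succ_row_zero]
  refine Finset.sum_congr rfl fun j _ => ?_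
  have h1 : (Matrix.of fun i j : Fin (m+1) =>
        (Fin.cons v u : Fin (m+1) → ℂ → ℂ) i (x + ((j : Fin (m+1)) : ℕ))) 0 j
      = v (x + (j : ℕ)) := by simp
  have h2 : ((Matrix.of fun i j : Fin (m+1) =>
        (Fin.cons v u : Fin (m+1) → ℂ → ℂ) i (x + ((j : Fin (m+1)) : ℕ))).submatrix
        Fin.succ j.succAbove)
      = Matrix.of fun i k : Fin m => u i (x + ((j.succAbove k : Fin (m+1)) : ℕ)) := by
    ext i k
    simp [Fin.cons_succ]
  rw [h1, h2]

lemma lowOp_eq_wr {m : ℕ} (u : Fin m → ℂ → ℂ) (hu : ∀ x, dWr u x ≠ 0)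
    (c : Fin m → ℂ → ℂ) (hc : ∀ i x, lowOp c (u i) x = 0) (v : ℂ → ℂ) (x : ℂ) :
    lowOp c v x = (-1) ^ m * dWr (Fin.cons v u) x / dWr u x := by
  have h1 : ((-1 : ℂ)) ^ m * ((-1 : ℂ)) ^ m = 1 := by
    rw [← pow_add, ← two_mul, pow_mul]; norm_num
  set c' : Fin m → ℂ → ℂ := fun k y =>
    (-1) ^ (m + (k : ℕ)) *
      Matrix.det (Matrix.of fun i l : Fin m =>
        u i (y + (((k.castSucc : Fin (m+1)).succAbove l : Fin (m+1)) : ℕ))) / dWr u y with hc'def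
  have key : ∀ (w : ℂ → ℂ) (y : ℂ),
      lowOp c' w y = (-1) ^ m * dWr (Fin.cons w u) y / dWr u y := by
    intro w y
    have hW := hu y
    rw [dWr_cons_expand]
    rw [Fin.sum_univ_castSucc (f := fun j : Fin (m+1) => (-1) ^ (j : ℕ) * w (y + (j : ℕ)) *
      Matrix.det (Matrix.of fun i k : Fin m => u i (y + ((j.succAbove k : Fin (m+1)) : ℕ))))]
    have hlast : Matrix.det (Matrix.of fun i k : Fin m =>
        u i (y + (((Fin.last m).succAbove k : Fin (m+1)) : ℕ))) = dWr u y := by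
      unfold dWr
      congr 1
      ext i k
      simp [Fin.succAbove_last]
    rw [hlast]
    unfold lowOp
    simp only [hc'def, Fin.coe_castSucc, Fin.val_last]
    rw [mul_add, add_div, add_comm]
    congr 1
    · rw [mul_div_assoc, Finset.sum_div, Finset.mul_sum]
      refine Finset.sum_congr rfl fun k _ => ?_
      rw [pow_add]
      field_simp
    · rw [mul_div_assoc, mul_div_cancel_right₀ _ hW, ← mul_assoc, h1, one_mul]
  have hc'ann : ∀ i y, lowOp c' (u i) y = 0 := by
    intro i y
    rw [key]
    have hz : dWr (Fin.cons (u i) u) y = 0 := by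
      unfold dWr
      refine Matrix.det_zero_of_row_eq (i := 0) (j := i.succ) (Fin.succ_ne_zero i).symm ?_
      ext k
      simp [Fin.cons_succ]
    rw [hz]
    simp
  have hcc : c = c' := lowOp_unique u hu c c' hc hc'ann
  rw [hcc, key]

lemma annih : ∀ {n : ℕ} (f : Fin n → ℂ → ℂ)
    (_ : ∀ i ≤ n, ∀ x : ℂ, dWrL ((List.ofFn f).drop i) x ≠ 0) (i : Fin n) (x : ℂ),
    ((List.ofFn fun i : Fin n => fun y : ℂ =>
        (dWrL ((List.ofFn f).drop i) (y + 1) / dWrL ((List.ofFn f).drop (i + 1)) (y + 1)) /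
        (dWrL ((List.ofFn f).drop i) y / dWrL ((List.ofFn f).drop (i + 1)) y)).foldr
      factorApply (f i)) x = 0 := by
  intro n
  induction n with
  | zero => exact fun f _ i => absurd i.2 (by omega)
  | succ m ih =>
    intro f hW i x
    set f' : Fin m → ℂ → ℂ := fun j => f j.succ with hf'def
    have hlist : List.ofFn f = f 0 :: List.ofFn f' := List.ofFn_succ
    set Rf : Fin (m+1) → ℂ → ℂ := fun i : Fin (m+1) => fun y : ℂ =>
        (dWrL ((List.ofFn f).drop i) (y + 1) / dWrL ((List.ofFn f).drop (i + 1)) (y + 1)) /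
        (dWrL ((List.ofFn f).drop i) y / dWrL ((List.ofFn f).drop (i + 1)) y) with hRf
    set Rf' : Fin m → ℂ → ℂ := fun i : Fin m => fun y : ℂ =>
        (dWrL ((List.ofFn f').drop i) (y + 1) / dWrL ((List.ofFn f').drop (i + 1)) (y + 1)) /
        (dWrL ((List.ofFn f').drop i) y / dWrL ((List.ofFn f').drop (i + 1)) y) with hRf'
    have htail : (fun j : Fin m => Rf j.succ) = Rf' := by
      funext j
      rw [hRf, hRf']
      simp only [hlist, Fin.val_succ, List.drop_succ_cons]
    have hW' : ∀ i ≤ m, ∀ x : ℂ, dWrL ((List.ofFn f').drop i) x ≠ 0 := by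
      intro i hi x
      have := hW (i+1) (by omega) x
      rwa [hlist, List.drop_succ_cons] at this
    have hfold : List.ofFn Rf = Rf 0 :: List.ofFn Rf' := by
      rw [List.ofFn_succ, htail]
    rw [hfold, List.foldr_cons]
    have IH := ih f' hW'
    -- IH : ∀ j x, (List.ofFn Rf').foldr factorApply (f' j) x = 0
    refine Fin.cases ?_ ?_ i
    · -- i = 0
      obtain ⟨c, hc⟩ := foldr_lowform Rf'
      have hcann : ∀ j y, lowOp c (f' j) y = 0 := by
        intro j y; rw [← hc]; exact IH j y
      have hu : ∀ y, dWr f' y ≠ 0 := by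
        intro y
        have := hW 1 (by omega) y
        rwa [hlist, List.drop_succ_cons, List.drop_zero, dWrL_ofFn] at this
      have hf : ∀ y, dWr f y ≠ 0 := by
        intro y
        have := hW 0 (by omega) y
        rwa [List.drop_zero, dWrL_ofFn] at this
      have hg : ∀ y, (List.ofFn Rf').foldr factorApply (f 0) y
          = (-1) ^ m * dWr f y / dWr f' y := by
        intro y
        rw [hc, lowOp_eq_wr f' hu c hcann (f 0) y]
        congr 2
        exact congrArg (fun z => dWr z y) (Fin.cons_self_tail f)
      show factorApply (Rf 0) ((List.ofFn Rf').foldr factorApply (f 0)) x = 0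
      have hfa : ∀ (r g : ℂ → ℂ) (y : ℂ), factorApply r g y = g (y+1) - r y * g y :=
        fun _ _ _ => rfl
      rw [hfa, hg, hg]
      have hd0 : ∀ z, dWrL ((List.ofFn f).drop 0) z = dWr f z := fun z => by
        rw [List.drop_zero, dWrL_ofFn]
      have hd1 : ∀ z, dWrL ((List.ofFn f).drop 1) z = dWr f' z := fun z => by
        rw [hlist, List.drop_succ_cons, List.drop_zero, dWrL_ofFn]
      have hR0 : Rf 0 x = (dWr f (x + 1) / dWr f' (x + 1)) / (dWr f x / dWr f' x) := by
        simp only [hRf, Fin.val_zero, zero_add, Nat.zero_add]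
        rw [hd0, hd0, hd1, hd1]
      rw [hR0]
      field_simp [hf x, hu x, hf (x+1), hu (x+1)]
      ring
    · -- i = j.succ
      intro j
      show factorApply (Rf 0) ((List.ofFn Rf').foldr factorApply (f j.succ)) x = 0
      have hfa : ∀ (r g : ℂ → ℂ) (y : ℂ), factorApply r g y = g (y+1) - r y * g y :=
        fun _ _ _ => rfl
      rw [hfa]
      have h1 := IH j (x + 1)
      have h2 := IH j x
      rw [hf'def] at h1 h2
      simp only [] at h1 h2
      rw [h1, h2]
      ring

theorem stmt1 {n : ℕ} (f : Fin n → ℂ → ℂ)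
    (hW : ∀ i ≤ n, ∀ x : ℂ, dWrL ((List.ofFn f).drop i) x ≠ 0)
    (a : Fin n → ℂ → ℂ)
    (hS : ∀ i x, diffOpApply a (f i) x = 0) :
    ∀ (h : ℂ → ℂ) (x : ℂ),
      diffOpApply a h x =
        (((List.ofFn fun i : Fin n => fun y : ℂ =>
            (dWrL ((List.ofFn f).drop i) (y + 1) / dWrL ((List.ofFn f).drop (i + 1)) (y + 1)) /
            (dWrL ((List.ofFn f).drop i) y / dWrL ((List.ofFn f).drop (i + 1)) y)).foldr
          factorApply h) x) := by
  intro h x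
  have hdiff : ∀ (g : ℂ → ℂ) (y : ℂ),
      diffOpApply a g y = lowOp (fun k => a k.rev) g y := by
    intro g y
    unfold diffOpApply lowOp
    congr 1
    refine (Fintype.sum_bijective Fin.rev Fin.rev_bijective _ _ fun j => ?_).symm
    simp only []
    have hj : (n - ((j.rev : ℕ) + 1)) = (j : ℕ) := by
      have := j.2
      rw [Fin.val_rev]
      omega
    rw [hj]
  obtain ⟨c, hc⟩ := foldr_lowform (fun i : Fin n => fun y : ℂ =>
      (dWrL ((List.ofFn f).drop i) (y + 1) / dWrL ((List.ofFn f).drop (i + 1)) (y + 1)) /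
      (dWrL ((List.ofFn f).drop i) y / dWrL ((List.ofFn f).drop (i + 1)) y))
  have hf : ∀ y, dWr f y ≠ 0 := by
    intro y
    have := hW 0 (by omega) y
    rwa [List.drop_zero, dWrL_ofFn] at this
  have hcann : ∀ i y, lowOp c (f i) y = 0 := by
    intro i y
    rw [← hc]
    exact annih f hW i y
  have haann : ∀ i y, lowOp (fun k => a k.rev) (f i) y = 0 := by
    intro i y
    rw [← hdiff]
    exact hS i y
  have : (fun k => a k.rev) = c := lowOp_unique f hf _ c haann hcann
  rw [hdiff, this, ← hc]
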